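/- Let Γ be a finite simplicial graph, 𝒢 a collection of non-trivial groups indexed by V(Γ), and Φ, Ψ ⊆ Γ two induced subgraphs. Decompose Φ as a join Φ₀ ∗ Φ₁ and Ψ as a join Ψ₀ ∗ Ψ₁, where Φ₁ and Ψ₁ are complete and where Φ₀ and Ψ₀ are not the star of one of their vertices. Then the Hausdorff distance in X(Γ, 𝒢) between the parabolic subgroups ⟨Φ⟩ and ⟨Ψ⟩ is finite if and only if Φ₀ = Ψ₀. -/

import Mathlib

/-- Word length distance on a group with respect to a generating set `S`. -/
noncomputable def wordDist {G : Type*} [Group G] (S : Set G) (g h : G) : ℕ :=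
  sInf {n : ℕ | ∃ l : List G, l.length = n ∧ (∀ x ∈ l, x ∈ S ∨ x⁻¹ ∈ S) ∧ g⁻¹ * h = l.prod}

/-- The commutation relators defining a graph product. -/
def graphProductRels {V : Type*} (Γ : SimpleGraph V) (G : V → Type*) [∀ v, Group (G v)] :
    Set (Monoid.CoprodI G) :=
  {x | ∃ (u v : V) (a : G u) (b : G v), Γ.Adj u v ∧
    x = Monoid.CoprodI.of a * Monoid.CoprodI.of b * (Monoid.CoprodI.of a)⁻¹ *
      (Monoid.CoprodI.of b)⁻¹}

/-- The graph product of the groups `G v` over the simplicial graph `Γ`. -/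
def graphProduct {V : Type*} (Γ : SimpleGraph V) (G : V → Type*) [∀ v, Group (G v)] : Type _ :=
  Monoid.CoprodI G ⧸ Subgroup.normalClosure (graphProductRels Γ G)

instance {V : Type*} (Γ : SimpleGraph V) (G : V → Type*) [∀ v, Group (G v)] :
    Group (graphProduct Γ G) :=
  QuotientGroup.Quotient.group _

/-- The canonical morphism from a vertex group into the graph product. -/
def gpOf {V : Type*} (Γ : SimpleGraph V) (G : V → Type*) [∀ v, Group (G v)] (u : V) :
    G u →* graphProduct Γ G :=
  (QuotientGroup.mk' _).comp Monoid.CoprodI.of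

/-- The generating set of the graph product given by the union of (images of) the vertex
groups, with the identity removed. -/
def vertexGens {V : Type*} (Γ : SimpleGraph V) (G : V → Type*) [∀ v, Group (G v)] :
    Set (graphProduct Γ G) :=
  ⋃ u : V, (Set.range (gpOf Γ G u) \ {1})

/-- The parabolic subgroup `⟨Λ⟩` generated by the vertex groups of `Λ`. -/
def parabolic {V : Type*} (Γ : SimpleGraph V) (G : V → Type*) [∀ v, Group (G v)] (Λ : Set V) :
    Subgroup (graphProduct Γ G) :=
  Subgroup.closure (⋃ u ∈ Λ, Set.range (gpOf Γ G u))

/-- The word metric on the graph product, with respect to the union of the vertex groups. -/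
noncomputable def gpDist {V : Type*} (Γ : SimpleGraph V) (G : V → Type*) [∀ v, Group (G v)]
    (g h : graphProduct Γ G) : ℝ :=
  (wordDist (vertexGens Γ G) g h : ℝ)
/-- `a b c d` is an induced 4-cycle (induced square) of `Γ`, with diagonals `(a,c)` and `(b,d)`. -/
def IsInducedSquare {V : Type*} (Γ : SimpleGraph V) (a b c d : V) : Prop :=
  Γ.Adj a b ∧ Γ.Adj b c ∧ Γ.Adj c d ∧ Γ.Adj d a ∧ ¬Γ.Adj a c ∧ ¬Γ.Adj b d ∧ a ≠ c ∧ b ≠ d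

/-- A set of vertices is square-complete if every induced square of `Γ` having two opposite
vertices in it lies entirely in it. -/
def SquareComplete {V : Type*} (Γ : SimpleGraph V) (Λ : Set V) : Prop :=
  ∀ a b c d, IsInducedSquare Γ a b c d → a ∈ Λ → c ∈ Λ → b ∈ Λ ∧ d ∈ Λ

/-- `Λ` contains an induced square of `Γ`. -/
def HasInducedSquareIn {V : Type*} (Γ : SimpleGraph V) (Λ : Set V) : Prop :=
  ∃ a b c d, IsInducedSquare Γ a b c d ∧ a ∈ Λ ∧ b ∈ Λ ∧ c ∈ Λ ∧ d ∈ Λ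

/-- A minsquare subgraph: minimal among square-complete subgraphs containing an induced square. -/
def IsMinsquare {V : Type*} (Γ : SimpleGraph V) (Λ : Set V) : Prop :=
  SquareComplete Γ Λ ∧ HasInducedSquareIn Γ Λ ∧
    ∀ Λ' ⊆ Λ, SquareComplete Γ Λ' → HasInducedSquareIn Γ Λ' → Λ' = Λ

/-- A set of vertices spanning a complete subgraph. -/
def IsCompleteSet {V : Type*} (Γ : SimpleGraph V) (S : Set V) : Prop :=
  ∀ a ∈ S, ∀ b ∈ S, a ≠ b → Γ.Adj a b
/-- The Cayley graph of a group with respect to a set `S` of generators. -/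
def cayley {G : Type*} [Group G] (S : Set G) : SimpleGraph G where
  Adj x y := x ≠ y ∧ (x⁻¹ * y ∈ S ∨ y⁻¹ * x ∈ S)
  symm := ⟨by rintro x y ⟨h1, h2⟩; exact ⟨h1.symm, h2.symm⟩⟩
  loopless := ⟨fun x h => h.1 rfl⟩

/-- A connected graph is Gromov hyperbolic: there is `δ ≥ 0` such that all of its geodesic
triangles are `δ`-thin, i.e. every vertex on a geodesic between `x` and `y` is at distance at
most `δ` from a vertex lying on a geodesic from `x` to `z` or on a geodesic from `y` to `z`. -/
def GraphHyperbolic {X : Type*} (G : SimpleGraph X) : Prop :=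
  ∃ δ : ℕ, ∀ x y z p : X, G.dist x p + G.dist p y = G.dist x y →
    ∃ q : X, (G.dist x q + G.dist q z = G.dist x z ∨ G.dist y q + G.dist q z = G.dist y z) ∧
      G.dist p q ≤ δ
/-- The clique number of `Γ`: the maximal number of vertices of a complete subgraph. -/
noncomputable def cliqueNum {V : Type*} (Γ : SimpleGraph V) : ℕ :=
  sSup {n | ∃ s : Finset V, Γ.IsNClique n s}

/-- The Hausdorff distance between `A` and `B` in the graph metric of `G` is at most `C`. -/
def HausdorffLEN {X : Type*} (G : SimpleGraph X) (A B : Set X) (C : ℕ) : Prop :=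
  (∀ a ∈ A, ∃ b ∈ B, G.dist a b ≤ C) ∧ (∀ b ∈ B, ∃ a ∈ A, G.dist a b ≤ C)

set_option linter.unusedSectionVars false
set_option maxHeartbeats 1000000

open Monoid


open Monoid Monoid.CoprodI

section WordLen
variable {ι : Type*} [DecidableEq ι] {M : ι → Type*} [∀ i, Group (M i)]
  [∀ i, DecidableEq (M i)]

noncomputable def wlen (x : CoprodI M) : ℕ := (Word.equiv x).toList.length

lemma rcons_length_le {i : ι} (p : Word.Pair M i) :
    (Word.rcons p).toList.length ≤ p.tail.toList.length + 1 := by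
  rw [Word.rcons]
  split
  · omega
  · simp [Word.cons]

lemma le_rcons_length {i : ι} (p : Word.Pair M i) :
    p.tail.toList.length ≤ (Word.rcons p).toList.length := by
  rw [Word.rcons]
  split
  · omega
  · simp [Word.cons]

lemma smul_length_le {i : ι} (m : M i) (w : Word M) :
    (CoprodI.of m • w).toList.length ≤ w.toList.length + 1 := by
  rw [Word.of_smul_def]
  refine le_trans (rcons_length_le _) ?_
  have h2 : Word.rcons (Word.equivPair i w) = w := by
    rw [← Word.equivPair_symm, Equiv.symm_apply_apply]
  have := le_rcons_length (Word.equivPair i w)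
  rw [h2] at this
  simpa using Nat.add_le_add_right this 1

lemma equiv_mul (x y : CoprodI M) : Word.equiv (x * y) = x • Word.equiv y := by
  simp only [Word.equiv, Equiv.coe_fn_mk]
  rw [mul_smul]

lemma wlen_of_mul_le (i : ι) (m : M i) (x : CoprodI M) :
    wlen (CoprodI.of m * x) ≤ wlen x + 1 := by
  rw [wlen, wlen, equiv_mul]
  exact smul_length_le m _

end WordLen

section Alt
variable {ι : Type*} [DecidableEq ι] {M : ι → Type*} [∀ i, Group (M i)]
  [∀ i, DecidableEq (M i)]

lemma wlen_one : wlen (1 : CoprodI M) = 0 := by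
  have : Word.equiv (1 : CoprodI M) = Word.empty := by
    simp only [Word.equiv, Equiv.coe_fn_mk, one_smul]
  rw [wlen, this]
  rfl

lemma wlen_of {i : ι} (m : M i) : wlen (CoprodI.of m) ≤ 1 := by
  have := wlen_of_mul_le i m (1 : CoprodI M)
  rw [mul_one, wlen_one] at this
  exact this

def altList (i j : ι) (a : M i) (b : M j) : ℕ → List (Σ k, M k)
  | 0 => []
  | n+1 => ⟨i, a⟩ :: ⟨j, b⟩ :: altList i j a b n

lemma altList_length (i j : ι) (a : M i) (b : M j) :
    ∀ n, (altList i j a b n).length = 2 * n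
  | 0 => rfl
  | n+1 => by
    rw [altList]
    simp [altList_length i j a b n]
    omega

lemma altList_ne_one {i j : ι} {a : M i} {b : M j} (ha : a ≠ 1) (hb : b ≠ 1) :
    ∀ n, ∀ l ∈ altList i j a b n, Sigma.snd l ≠ 1
  | 0 => by simp [altList]
  | n+1 => by
    intro l hl
    rw [altList, List.mem_cons, List.mem_cons] at hl
    rcases hl with rfl | rfl | hl
    · exact ha
    · exact hb
    · exact altList_ne_one ha hb n l hl

lemma altList_chain {i j : ι} (hij : i ≠ j) (a : M i) (b : M j) :
    ∀ n, (altList i j a b n).Chain' fun l l' => l.1 ≠ l'.1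
  | 0 => List.isChain_nil
  | 1 => by
    simp only [List.Chain', altList, List.isChain_cons_cons, List.isChain_singleton, and_true]
    exact hij
  | (n+2) => by
    have ih := altList_chain hij a b (n+1)
    simp only [List.Chain', altList, List.isChain_cons_cons] at ih ⊢
    exact ⟨hij, hij.symm, ih⟩

lemma altList_prod (i j : ι) (a : M i) (b : M j) :
    ∀ n, ((altList i j a b n).map fun l => CoprodI.of l.2).prod
      = (CoprodI.of a * CoprodI.of b)^n
  | 0 => by simp [altList]
  | n+1 => by
    rw [altList, pow_succ']
    simp only [List.map_cons, List.prod_cons, altList_prod i j a b n]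
    rw [mul_assoc]

/-- The alternating reduced word. -/
def altWord {i j : ι} (hij : i ≠ j) {a : M i} {b : M j} (ha : a ≠ 1) (hb : b ≠ 1) (n : ℕ) :
    Word M :=
  ⟨altList i j a b n, altList_ne_one ha hb n, altList_chain hij a b n⟩

lemma wlen_alt_pow {i j : ι} (hij : i ≠ j) {a : M i} {b : M j} (ha : a ≠ 1) (hb : b ≠ 1)
    (n : ℕ) : wlen ((CoprodI.of a * CoprodI.of b)^n) = 2 * n := by
  have h1 : Word.equiv ((CoprodI.of a * CoprodI.of b)^n) = altWord hij ha hb n := by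
    rw [Equiv.apply_eq_iff_eq_symm_apply]
    have h2 : Word.equiv.symm (altWord hij ha hb n) = Word.prod (M := M) (altWord hij ha hb n) := rfl
    rw [h2, Word.prod]
    exact (altList_prod i j a b n).symm
  rw [wlen, h1]
  exact altList_length i j a b n

end Alt

/- ===== generic group lemmas ===== -/

lemma sup_decomp {Gr : Type*} [Group Gr] (H K : Subgroup Gr)
    (hc : ∀ h ∈ H, ∀ k ∈ K, Commute h k) :
    ∀ x ∈ H ⊔ K, ∃ h ∈ H, ∃ k ∈ K, x = h * k := by
  intro x hx
  have hsup : H ⊔ K = Subgroup.closure ((H : Set Gr) ∪ (K : Set Gr)) := by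
    rw [Subgroup.closure_union, Subgroup.closure_eq, Subgroup.closure_eq]
  rw [hsup] at hx
  refine Subgroup.closure_induction ?_ ?_ ?_ ?_ hx
  · rintro y (hy | hy)
    · exact ⟨y, hy, 1, one_mem _, (mul_one y).symm⟩
    · exact ⟨1, one_mem _, y, hy, (one_mul y).symm⟩
  · exact ⟨1, one_mem _, 1, one_mem _, (one_mul 1).symm⟩
  · rintro y z - - ⟨h1, hh1, k1, hk1, rfl⟩ ⟨h2, hh2, k2, hk2, rfl⟩
    refine ⟨h1 * h2, mul_mem hh1 hh2, k1 * k2, mul_mem hk1 hk2, ?_⟩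
    have hcomm := (hc h2 hh2 k1 hk1).eq
    rw [mul_assoc, ← mul_assoc k1 h2 k2, ← hcomm, mul_assoc h2 k1 k2, ← mul_assoc]
  · rintro y - ⟨h, hh, k, hk, rfl⟩
    refine ⟨h⁻¹, inv_mem hh, k⁻¹, inv_mem hk, ?_⟩
    rw [mul_inv_rev]
    exact ((hc h hh k hk).inv_inv.eq).symm

/- ===== cayley graph lemmas ===== -/

section Cayley
variable {Gr : Type*} [Group Gr] (S : Set Gr)

lemma cayley_adj_mul (g : Gr) {x y : Gr} (h : (cayley S).Adj x y) :
    (cayley S).Adj (g * x) (g * y) := by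
  obtain ⟨h1, h2⟩ := h
  refine ⟨fun he => h1 (mul_left_cancel he), ?_⟩
  simpa [mul_assoc, inv_mul_cancel_left] using h2

def cayleyMulHom (g : Gr) : cayley S →g cayley S :=
  ⟨fun x => g * x, fun h => cayley_adj_mul S g h⟩

lemma cayley_reachable_one (h1 : (1 : Gr) ∉ S) {g : Gr} (hg : g ∈ Subgroup.closure S) :
    (cayley S).Reachable 1 g := by
  refine Subgroup.closure_induction ?_ ?_ ?_ ?_ hg
  · intro s hs
    refine SimpleGraph.Adj.reachable ⟨fun he => h1 (he ▸ hs), Or.inl ?_⟩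
    simpa using hs
  · exact SimpleGraph.Reachable.refl 1
  · intro a b _ _ ha hb
    refine ha.trans ?_
    have h2 : (cayley S).Reachable (a * 1) (a * b) := hb.map (cayleyMulHom S a)
    simpa using h2
  · intro a _ ha
    have h2 : (cayley S).Reachable (a⁻¹ * 1) (a⁻¹ * a) := ha.map (cayleyMulHom S a⁻¹)
    simpa using h2.symm

lemma cayley_preconnected (h1 : (1 : Gr) ∉ S) (htop : Subgroup.closure S = ⊤) :
    (cayley S).Preconnected := by
  intro x y
  have hmem : x⁻¹ * y ∈ Subgroup.closure S := htop ▸ Subgroup.mem_top _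
  have h2 : (cayley S).Reachable (x * 1) (x * (x⁻¹ * y)) :=
    (cayley_reachable_one S h1 hmem).map (cayleyMulHom S x)
  simpa using h2

lemma cayley_connected (h1 : (1 : Gr) ∉ S) (htop : Subgroup.closure S = ⊤) :
    (cayley S).Connected := by
  haveI : Nonempty Gr := ⟨1⟩
  exact SimpleGraph.Connected.mk (cayley_preconnected S h1 htop)

lemma cayley_dist_step (h1 : (1 : Gr) ∉ S) (x z : Gr) (hz : z ∈ S ∨ z = 1) :
    (cayley S).dist x (x * z) ≤ 1 := by
  rcases hz with hz | rfl
  · have hadj : (cayley S).Adj x (x * z) := by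
      refine ⟨fun he => ?_, Or.inl (by simpa using hz)⟩
      · have : z = 1 := by
          have := mul_left_cancel (a := x) (by simpa using he.symm)
          simpa using this
        exact h1 (this ▸ hz)
    calc (cayley S).dist x (x * z) ≤ hadj.toWalk.length := SimpleGraph.dist_le _
    _ = 1 := rfl
  · simp [SimpleGraph.dist_self]

lemma cayley_dist_prod (h1 : (1 : Gr) ∉ S) (htop : Subgroup.closure S = ⊤)
    (l : List Gr) (hl : ∀ z ∈ l, z ∈ S ∨ z = 1) :
    ∀ x : Gr, (cayley S).dist x (x * l.prod) ≤ l.length := by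
  induction l with
  | nil => simp [SimpleGraph.dist_self]
  | cons z l ih =>
    intro x
    have h2 : x * (z :: l).prod = (x * z) * l.prod := by
      simp [List.prod_cons, mul_assoc]
    rw [h2]
    calc (cayley S).dist x (x * z * l.prod)
        ≤ (cayley S).dist x (x * z) + (cayley S).dist (x * z) (x * z * l.prod) :=
          (cayley_connected S h1 htop).dist_triangle
      _ ≤ 1 + l.length := by
          gcongr
          · exact cayley_dist_step S h1 x z (hl z List.mem_cons_self)
          · exact ih (fun w hw => hl w (List.mem_cons_of_mem z hw)) (x * z)
      _ = (z :: l).length := by simp [Nat.add_comm]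

end Cayley

/- ===== graph product lemmas ===== -/

section GP
variable {V : Type*} (Γ : SimpleGraph V) (G : V → Type*) [∀ v, Group (G v)]

open scoped commutatorElement in
lemma gp_commute {p q : V} (h : Γ.Adj p q) (a : G p) (b : G q) :
    Commute (gpOf Γ G p a) (gpOf Γ G q b) := by
  rw [← commutatorElement_eq_one_iff_commute]
  have hrel : (Monoid.CoprodI.of a * Monoid.CoprodI.of b * (Monoid.CoprodI.of a)⁻¹ *
      (Monoid.CoprodI.of b)⁻¹ : Monoid.CoprodI G)
      ∈ Subgroup.normalClosure (graphProductRels Γ G) :=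
    Subgroup.subset_normalClosure ⟨p, q, a, b, h, rfl⟩
  have h1 : ((QuotientGroup.mk (Monoid.CoprodI.of a * Monoid.CoprodI.of b *
      (Monoid.CoprodI.of a)⁻¹ * (Monoid.CoprodI.of b)⁻¹) : graphProduct Γ G)) = 1 :=
    (QuotientGroup.eq_one_iff _).2 hrel
  exact Eq.trans (show (⁅gpOf Γ G p a, gpOf Γ G q b⁆ : graphProduct Γ G)
      = (QuotientGroup.mk (Monoid.CoprodI.of a * Monoid.CoprodI.of b *
        (Monoid.CoprodI.of a)⁻¹ * (Monoid.CoprodI.of b)⁻¹) : graphProduct Γ G) by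
        rfl) h1

lemma mem_parabolic_of (w : V) {Λ : Set V} (hw : w ∈ Λ) (g : G w) :
    gpOf Γ G w g ∈ parabolic Γ G Λ :=
  Subgroup.subset_closure (Set.mem_biUnion hw ⟨g, rfl⟩)

lemma parabolic_mono {P Q : Set V} (h : P ⊆ Q) : parabolic Γ G P ≤ parabolic Γ G Q :=
  Subgroup.closure_mono (Set.biUnion_subset_biUnion_left h)

lemma parabolic_union (P Q : Set V) :
    parabolic Γ G (P ∪ Q) = parabolic Γ G P ⊔ parabolic Γ G Q := by
  rw [parabolic, Set.biUnion_union, Subgroup.closure_union]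
  rfl

lemma parabolic_singleton (w : V) : parabolic Γ G {w} = (gpOf Γ G w).range := by
  rw [parabolic, Set.biUnion_singleton, ← MonoidHom.coe_range, Subgroup.closure_eq]

lemma commute_parabolic_of_join {P Q : Set V} (hjoin : ∀ p ∈ P, ∀ q ∈ Q, Γ.Adj p q) :
    ∀ x ∈ parabolic Γ G P, ∀ y ∈ parabolic Γ G Q, Commute x y := by
  intro x hx
  refine Subgroup.closure_induction ?_ ?_ ?_ ?_ hx
  · intro z hz
    simp only [Set.mem_iUnion] at hz
    obtain ⟨p, hp, g, rfl⟩ := hz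
    intro y hy
    refine Subgroup.closure_induction ?_ ?_ ?_ ?_ hy
    · intro w hw
      simp only [Set.mem_iUnion] at hw
      obtain ⟨q, hq, b, rfl⟩ := hw
      exact gp_commute Γ G (hjoin p hp q hq) g b
    · exact Commute.one_right _
    · intro y z _ _ h1 h2
      exact h1.mul_right h2
    · intro y _ h1
      exact h1.inv_right
  · intro y _
    exact Commute.one_left _
  · intro z w _ _ h1 h2 y hy
    exact (h1 y hy).mul_left (h2 y hy)
  · intro z _ h1 y hy
    exact (h1 y hy).inv_left

lemma one_not_mem_vertexGens : (1 : graphProduct Γ G) ∉ vertexGens Γ G := by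
  intro h
  rcases Set.mem_iUnion.1 h with ⟨u, hu⟩
  exact hu.2 rfl

lemma closure_vertexGens_top : Subgroup.closure (vertexGens Γ G) = ⊤ := by
  rw [Subgroup.eq_top_iff']
  intro x
  obtain ⟨y, rfl⟩ := QuotientGroup.mk'_surjective (Subgroup.normalClosure (graphProductRels Γ G)) x
  refine Monoid.CoprodI.induction_on y ?_ ?_ ?_
  · rw [map_one]; exact one_mem _
  · intro i m
    by_cases hm : gpOf Γ G i m = 1
    · have : (QuotientGroup.mk' (Subgroup.normalClosure (graphProductRels Γ G)))
          (Monoid.CoprodI.of m) = gpOf Γ G i m := rfl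
      rw [this, hm]; exact one_mem _
    · refine Subgroup.subset_closure ?_
      exact Set.mem_iUnion.2 ⟨i, ⟨m, rfl⟩, hm⟩
  · intro a b ha hb
    rw [map_mul]; exact mul_mem ha hb

end GP

/- ===== bounded products over complete subsets ===== -/

section CompleteBound
variable {V : Type*} (Γ : SimpleGraph V) (G : V → Type*) [∀ v, Group (G v)]

lemma complete_bound (S : Finset V) (hS : ∀ p ∈ S, ∀ q ∈ S, p ≠ q → Γ.Adj p q) :
    ∀ x ∈ parabolic Γ G (S : Set V), ∃ l : List (graphProduct Γ G),
      l.length = S.card ∧ (∀ z ∈ l, ∃ w, z ∈ Set.range (gpOf Γ G w)) ∧ x = l.prod := by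
  induction S using Finset.cons_induction_on with
  | empty =>
    intro x hx
    have hbot : parabolic Γ G ((∅ : Finset V) : Set V) = ⊥ := by
      rw [parabolic]
      simp
    rw [hbot, Subgroup.mem_bot] at hx
    exact ⟨[], rfl, by simp, by simp [hx]⟩
  | @cons w S' hw ih =>
    intro x hx
    have hS' : ∀ p ∈ S', ∀ q ∈ S', p ≠ q → Γ.Adj p q := fun p hp q hq hne =>
      hS p (Finset.mem_cons_of_mem hp) q (Finset.mem_cons_of_mem hq) hne
    have hcoe : ((Finset.cons w S' hw : Finset V) : Set V) = {w} ∪ (S' : Set V) := by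
      rw [Finset.coe_cons, Set.insert_eq]
    rw [hcoe, parabolic_union] at hx
    have hcomm : ∀ a ∈ parabolic Γ G {w}, ∀ b ∈ parabolic Γ G (S' : Set V), Commute a b := by
      refine commute_parabolic_of_join Γ G ?_
      rintro p rfl q hq
      exact hS p (Finset.mem_cons_self _ _) q (Finset.mem_cons_of_mem hq)
        (fun he => hw (he ▸ hq))
    obtain ⟨h, hh, k, hk, rfl⟩ := sup_decomp _ _ hcomm x hx
    obtain ⟨l, hlen, hmem, rfl⟩ := ih hS' k hk
    refine ⟨h :: l, by simp [hlen, Finset.card_cons], ?_, by simp⟩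
    intro z hz
    rcases List.mem_cons.1 hz with rfl | hz
    · rw [parabolic_singleton] at hh
      exact ⟨w, hh⟩
    · exact hmem z hz

end CompleteBound

/- ===== the retraction to a two-vertex free product ===== -/

def castHom {V : Type*} (G : V → Type*) [∀ v, Group (G v)] {a b : V} (h : a = b) :
    G a →* G b := by subst h; exact MonoidHom.id _

def pairFam (A B : Type u) : Bool → Type u := fun b => cond b A B

instance pairFamGroup (A B : Type u) [Group A] [Group B] : ∀ b, Group (pairFam A B b)
  | true => ‹Group A›
  | false => ‹Group B›

noncomputable instance pairFamDE (A B : Type u) : ∀ b, DecidableEq (pairFam A B b) :=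
  fun _ => Classical.decEq _

section Rho
variable {V : Type*} (Γ : SimpleGraph V) (G : V → Type*) [∀ v, Group (G v)] (u v : V)

noncomputable def fmap (w : V) : G w →* Monoid.CoprodI (pairFam (G u) (G v)) :=
  letI := Classical.decEq V
  if h : w = u then
    (Monoid.CoprodI.of (M := pairFam (G u) (G v)) (i := true)).comp (castHom G h)
  else if h' : w = v then
    (Monoid.CoprodI.of (M := pairFam (G u) (G v)) (i := false)).comp (castHom G h')
  else 1

lemma fmap_u (g : G u) :
    fmap G u v u g = Monoid.CoprodI.of (M := pairFam (G u) (G v)) (i := true) g := by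
  rw [fmap]
  rw [dif_pos rfl]
  rfl

lemma fmap_v (hvu : v ≠ u) (g : G v) :
    fmap G u v v g = Monoid.CoprodI.of (M := pairFam (G u) (G v)) (i := false) g := by
  rw [fmap]
  rw [dif_neg hvu, dif_pos rfl]
  rfl

lemma fmap_ne {w : V} (hu : w ≠ u) (hv : w ≠ v) : fmap G u v w = 1 := by
  rw [fmap]
  rw [dif_neg hu, dif_neg hv]

lemma fmap_form (w : V) (g : G w) :
    (∃ m : pairFam (G u) (G v) true, fmap G u v w g = Monoid.CoprodI.of m) ∨
    (∃ m : pairFam (G u) (G v) false, fmap G u v w g = Monoid.CoprodI.of m) ∨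
    fmap G u v w g = 1 := by
  by_cases hu : w = u
  · subst hu
    exact Or.inl ⟨g, by rw [fmap_u]⟩
  · by_cases hv : w = v
    · subst hv
      exact Or.inr (Or.inl ⟨g, by rw [fmap_v G u w hu]⟩)
    · exact Or.inr (Or.inr (by rw [fmap_ne G u v hu hv]; rfl))

noncomputable def bigHom : Monoid.CoprodI G →* Monoid.CoprodI (pairFam (G u) (G v)) :=
  Monoid.CoprodI.lift (fun w => fmap G u v w)

lemma fmap_commute (hnadj : ¬ Γ.Adj u v) {p q : V} (hpq : Γ.Adj p q) (a : G p) (b : G q) :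
    Commute (fmap G u v p a) (fmap G u v q b) := by
  by_cases hp : p = u
  · subst hp
    by_cases hq : q = v
    · subst hq; exact absurd hpq hnadj
    · by_cases hq' : q = p
      · subst hq'; exact absurd rfl hpq.ne
      · rw [fmap_ne G p v hq' hq, MonoidHom.one_apply]
        exact Commute.one_right _
  · by_cases hp' : p = v
    · subst hp'
      by_cases hq : q = u
      · subst hq; exact absurd hpq.symm hnadj
      · by_cases hq' : q = p
        · subst hq'; exact absurd rfl hpq.ne
        · rw [fmap_ne G u p hq hq', MonoidHom.one_apply]
          exact Commute.one_right _
    · rw [fmap_ne G u v hp hp', MonoidHom.one_apply]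
      exact Commute.one_left _

noncomputable def rho (hnadj : ¬ Γ.Adj u v) :
    graphProduct Γ G →* Monoid.CoprodI (pairFam (G u) (G v)) :=
  QuotientGroup.lift _ (bigHom G u v) (by
    refine Subgroup.normalClosure_le_normal ?_
    rintro x ⟨p, q, a, b, hpq, rfl⟩
    have hc := fmap_commute Γ G u v hnadj hpq a b
    simp only [SetLike.mem_coe, MonoidHom.mem_ker, map_mul, map_inv, bigHom,
      Monoid.CoprodI.lift_of]
    exact commutatorElement_eq_one_iff_commute.2 hc)

lemma rho_gpOf (hnadj : ¬ Γ.Adj u v) (w : V) (g : G w) :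
    rho Γ G u v hnadj (gpOf Γ G w g) = fmap G u v w g := by
  show QuotientGroup.lift _ (bigHom G u v) _ (QuotientGroup.mk (Monoid.CoprodI.of g)) = _
  rw [QuotientGroup.lift_mk]
  simp [bigHom, Monoid.CoprodI.lift_of]

end Rho

/- ===== the two halves ===== -/

section Halves
variable {V : Type*} (Γ : SimpleGraph V) (G : V → Type*) [∀ v, Group (G v)]

lemma easy_half [Fintype V] (Φ Φ₀ Φ₁ Ψ : Set V)
    (hsplit : Φ₀ ∪ Φ₁ = Φ)
    (hjoin : ∀ a ∈ Φ₀, ∀ b ∈ Φ₁, Γ.Adj a b)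
    (hcomplete : IsCompleteSet Γ Φ₁)
    (hle : parabolic Γ G Φ₀ ≤ parabolic Γ G Ψ) :
    ∀ x ∈ (parabolic Γ G Φ : Set (graphProduct Γ G)),
      ∃ y ∈ (parabolic Γ G Ψ : Set (graphProduct Γ G)),
        (cayley (vertexGens Γ G)).dist x y ≤ Fintype.card V := by
  intro x hx
  rw [← hsplit, parabolic_union] at hx
  have hcomm := commute_parabolic_of_join Γ G hjoin
  obtain ⟨x₀, hx₀, x₁, hx₁, rfl⟩ := sup_decomp _ _ hcomm x hx
  have hTcoe : (((Set.toFinite Φ₁).toFinset : Finset V) : Set V) = Φ₁ :=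
    Set.Finite.coe_toFinset _
  have hx₁' : x₁ ∈ parabolic Γ G (((Set.toFinite Φ₁).toFinset : Finset V) : Set V) := by
    rw [hTcoe]; exact hx₁
  obtain ⟨l, hlen, hmem, rfl⟩ := complete_bound Γ G (Set.toFinite Φ₁).toFinset
    (by
      intro p hp q hq hne
      exact hcomplete p ((Set.Finite.mem_toFinset _).1 hp) q
        ((Set.Finite.mem_toFinset _).1 hq) hne) x₁ hx₁'
  refine ⟨x₀, hle hx₀, ?_⟩
  have hl : ∀ z ∈ l, z ∈ vertexGens Γ G ∨ z = 1 := by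
    intro z hz
    obtain ⟨w, g, rfl⟩ := hmem z hz
    by_cases h1 : gpOf Γ G w g = 1
    · exact Or.inr h1
    · exact Or.inl (Set.mem_iUnion.2 ⟨w, ⟨g, rfl⟩, h1⟩)
  have hdist := cayley_dist_prod (vertexGens Γ G) (one_not_mem_vertexGens Γ G)
    (closure_vertexGens_top Γ G) l hl x₀
  rw [SimpleGraph.dist_comm]
  refine le_trans hdist ?_
  rw [hlen]
  exact Finset.card_le_univ _

lemma key_contra [∀ v, Nontrivial (G v)]
    (Φ Ψ₀ Ψ₁ Ψ : Set V)
    (hΨsplit : Ψ₀ ∪ Ψ₁ = Ψ)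
    (hΨjoin : ∀ a ∈ Ψ₀, ∀ b ∈ Ψ₁, Γ.Adj a b)
    (hΨcomplete : IsCompleteSet Γ Ψ₁)
    (u w : V) (hu : u ∈ Φ) (hw : w ∈ Φ) (hwu : w ≠ u) (hnadj : ¬ Γ.Adj u w)
    (huΨ₀ : u ∉ Ψ₀)
    (C : ℕ)
    (hH : ∀ x ∈ (parabolic Γ G Φ : Set (graphProduct Γ G)),
      ∃ y ∈ (parabolic Γ G Ψ : Set (graphProduct Γ G)),
        (cayley (vertexGens Γ G)).dist x y ≤ C) : False := by
  classical
  have h1S : (1 : graphProduct Γ G) ∉ vertexGens Γ G := one_not_mem_vertexGens Γ G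
  have htop := closure_vertexGens_top Γ G
  obtain ⟨a, ha⟩ := exists_ne (1 : G u)
  obtain ⟨b, hb⟩ := exists_ne (1 : G w)
  set ρ := rho Γ G u w hnadj with hρ
  -- at most one of u, w lies in Ψ
  have hnotboth : ¬ (u ∈ Ψ ∧ w ∈ Ψ) := by
    rintro ⟨huΨ, hwΨ⟩
    rw [← hΨsplit] at huΨ hwΨ
    have huΨ₁ : u ∈ Ψ₁ := huΨ.resolve_left huΨ₀
    rcases hwΨ with hwΨ₀ | hwΨ₁
    · exact hnadj (hΨjoin w hwΨ₀ u huΨ₁).symm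
    · exact hnadj (hΨcomplete u huΨ₁ w hwΨ₁ hwu.symm)
  -- the step function
  have hgen : ∀ s ∈ vertexGens Γ G,
      (∃ i : Bool, ∃ m : pairFam (G u) (G w) i, ρ s = Monoid.CoprodI.of m) ∨ ρ s = 1 := by
    intro s hs
    rcases Set.mem_iUnion.1 hs with ⟨p, hp⟩
    obtain ⟨⟨g, rfl⟩, -⟩ := hp
    rw [hρ, rho_gpOf]
    rcases fmap_form G u w p g with ⟨m, hm⟩ | ⟨m, hm⟩ | hm
    · exact Or.inl ⟨true, m, hm⟩
    · exact Or.inl ⟨false, m, hm⟩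
    · exact Or.inr hm
  have hstep : ∀ x y : graphProduct Γ G, (cayley (vertexGens Γ G)).Adj x y →
      wlen (ρ x⁻¹) ≤ wlen (ρ y⁻¹) + 1 := by
    rintro x y ⟨hxy, hor | hor⟩
    · have hx : ρ x⁻¹ = ρ (x⁻¹ * y) * ρ y⁻¹ := by
        rw [← map_mul]; congr 1; group
      rcases hgen _ hor with ⟨i, m, hm⟩ | hm
      · rw [hx, hm]
        exact wlen_of_mul_le i m _
      · rw [hx, hm, one_mul]
        exact Nat.le_succ _
    · have hx : ρ x⁻¹ = (ρ (y⁻¹ * x))⁻¹ * ρ y⁻¹ := by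
        rw [← map_inv, ← map_mul]; congr 1; group
      rcases hgen _ hor with ⟨i, m, hm⟩ | hm
      · rw [hx, hm, ← map_inv]
        exact wlen_of_mul_le i m⁻¹ _
      · rw [hx, hm, inv_one, one_mul]
        exact Nat.le_succ _
  have hwalk : ∀ (x y : graphProduct Γ G) (p : (cayley (vertexGens Γ G)).Walk x y),
      wlen (ρ x⁻¹) ≤ wlen (ρ y⁻¹) + p.length := by
    intro x y p
    induction p with
    | nil => simp
    | cons hadj p ih =>
      have h1 := hstep _ _ hadj
      simp only [SimpleGraph.Walk.length_cons]
      omega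
  -- the element deep inside ⟨Φ⟩
  set g0 : graphProduct Γ G := gpOf Γ G u a * gpOf Γ G w b with hg0
  have hgΦ : g0 ^ (C + 1) ∈ parabolic Γ G Φ :=
    pow_mem (mul_mem (mem_parabolic_of Γ G u hu a) (mem_parabolic_of Γ G w hw b)) _
  obtain ⟨h, hhΨ, hdist⟩ := hH _ hgΦ
  have hreach : (cayley (vertexGens Γ G)).Reachable (g0 ^ (C + 1)) h :=
    cayley_preconnected _ h1S htop _ _
  obtain ⟨p, hp⟩ := hreach.exists_walk_length_eq_dist
  have hlenC : p.length ≤ C := by rw [hp]; exact hdist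
  have h1 : wlen (ρ (g0 ^ (C + 1))⁻¹) ≤ wlen (ρ h⁻¹) + C :=
    le_trans (hwalk _ _ p) (by omega)
  -- ρ sends ⟨Ψ⟩ into a single factor
  have hΨrange : ∃ i : Bool, ∀ z ∈ parabolic Γ G Ψ,
      ρ z ∈ (Monoid.CoprodI.of (M := pairFam (G u) (G w)) (i := i)).range := by
    by_cases huΨ : u ∈ Ψ
    · refine ⟨true, fun z hz => ?_⟩
      have hle : parabolic Γ G Ψ ≤ Subgroup.comap ρ
          (Monoid.CoprodI.of (M := pairFam (G u) (G w)) (i := true)).range := by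
        rw [parabolic]
        refine (Subgroup.closure_le _).2 ?_
        rintro z hz
        simp only [Set.mem_iUnion] at hz
        obtain ⟨q, hqΨ, g, rfl⟩ := hz
        simp only [SetLike.mem_coe, Subgroup.mem_comap]
        rw [hρ, rho_gpOf]
        by_cases hqu : q = u
        · subst hqu
          rw [fmap_u]
          exact ⟨g, rfl⟩
        · by_cases hqw : q = w
          · subst hqw
            exact absurd ⟨huΨ, hqΨ⟩ hnotboth
          · rw [fmap_ne G u w hqu hqw, MonoidHom.one_apply]
            exact one_mem _
      exact hle hz
    · refine ⟨false, fun z hz => ?_⟩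
      have hle : parabolic Γ G Ψ ≤ Subgroup.comap ρ
          (Monoid.CoprodI.of (M := pairFam (G u) (G w)) (i := false)).range := by
        rw [parabolic]
        refine (Subgroup.closure_le _).2 ?_
        rintro z hz
        simp only [Set.mem_iUnion] at hz
        obtain ⟨q, hqΨ, g, rfl⟩ := hz
        simp only [SetLike.mem_coe, Subgroup.mem_comap]
        rw [hρ, rho_gpOf]
        by_cases hqu : q = u
        · subst hqu
          exact absurd hqΨ huΨ
        · by_cases hqw : q = w
          · subst hqw
            rw [fmap_v G u q hqu]
            exact ⟨g, rfl⟩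
          · rw [fmap_ne G u w hqu hqw, MonoidHom.one_apply]
            exact one_mem _
      exact hle hz
  obtain ⟨i, hrange⟩ := hΨrange
  have hFh : wlen (ρ h⁻¹) ≤ 1 := by
    obtain ⟨m, hm⟩ := hrange h⁻¹ (inv_mem hhΨ)
    rw [← hm]
    exact wlen_of m
  -- the length of the deep element
  have hFg : wlen (ρ (g0 ^ (C + 1))⁻¹) = 2 * (C + 1) := by
    have hq : ρ (g0 ^ (C + 1))⁻¹ =
        (Monoid.CoprodI.of (M := pairFam (G u) (G w)) (i := false) b⁻¹ *
         Monoid.CoprodI.of (M := pairFam (G u) (G w)) (i := true) a⁻¹) ^ (C + 1) := by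
      rw [← inv_pow, map_pow]
      congr 1
      rw [hg0, mul_inv_rev, map_mul, ← map_inv, ← map_inv, hρ, rho_gpOf, rho_gpOf,
        fmap_u, fmap_v G u w hwu]
      rfl
    rw [hq]
    exact wlen_alt_pow (i := false) (j := true) (M := pairFam (G u) (G w))
      (by decide) (a := b⁻¹) (b := a⁻¹) (inv_ne_one.2 hb) (inv_ne_one.2 ha) (C + 1)
  omega

end Halves

/-- **(Corollary 2.17.)** Let `Φ = Φ₀ ∗ Φ₁` and `Ψ = Ψ₀ ∗ Ψ₁` with `Φ₁, Ψ₁` complete and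
`Φ₀, Ψ₀` not the star of one of their vertices. The Hausdorff distance between the parabolic
subgroups `⟨Φ⟩` and `⟨Ψ⟩` in `X(Γ, 𝒢)` is finite if and only if `Φ₀ = Ψ₀`. -/
theorem parabolic_hausdorff_finite_iff
    {V : Type*} [Fintype V] (Γ : SimpleGraph V) (G : V → Type*)
    [∀ v, Group (G v)] [∀ v, Nontrivial (G v)]
    (Φ Φ₀ Φ₁ Ψ Ψ₀ Ψ₁ : Set V)
    (hΦsplit : Φ₀ ∪ Φ₁ = Φ) (hΦdisj : Disjoint Φ₀ Φ₁)
    (hΦjoin : ∀ a ∈ Φ₀, ∀ b ∈ Φ₁, Γ.Adj a b)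
    (hΦcomplete : IsCompleteSet Γ Φ₁)
    (hΦnostar : ¬ ∃ u ∈ Φ₀, ∀ v ∈ Φ₀, v ≠ u → Γ.Adj u v)
    (hΨsplit : Ψ₀ ∪ Ψ₁ = Ψ) (hΨdisj : Disjoint Ψ₀ Ψ₁)
    (hΨjoin : ∀ a ∈ Ψ₀, ∀ b ∈ Ψ₁, Γ.Adj a b)
    (hΨcomplete : IsCompleteSet Γ Ψ₁)
    (hΨnostar : ¬ ∃ u ∈ Ψ₀, ∀ v ∈ Ψ₀, v ≠ u → Γ.Adj u v) :
    (∃ C : ℕ, HausdorffLEN (cayley (vertexGens Γ G))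
        (parabolic Γ G Φ : Set (graphProduct Γ G))
        (parabolic Γ G Ψ : Set (graphProduct Γ G)) C) ↔
      Φ₀ = Ψ₀ := by
  constructor
  · rintro ⟨C, hH1, hH2⟩
    by_contra hne
    have hcases : (∃ u, u ∈ Φ₀ ∧ u ∉ Ψ₀) ∨ (∃ u, u ∈ Ψ₀ ∧ u ∉ Φ₀) := by
      by_contra hx
      push_neg at hx
      exact hne (Set.Subset.antisymm (fun z hz => hx.1 z hz) (fun z hz => hx.2 z hz))
    rcases hcases with ⟨u, hu, hu'⟩ | ⟨u, hu, hu'⟩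
    · have hstar : ∃ w ∈ Φ₀, w ≠ u ∧ ¬ Γ.Adj u w := by
        by_contra hc
        push_neg at hc
        exact hΦnostar ⟨u, hu, fun w hw hwne => hc w hw hwne⟩
      obtain ⟨w, hwΦ₀, hwu, hnadj⟩ := hstar
      exact key_contra Γ G Φ Ψ₀ Ψ₁ Ψ hΨsplit hΨjoin hΨcomplete u w
        (by rw [← hΦsplit]; exact Set.mem_union_left _ hu)
        (by rw [← hΦsplit]; exact Set.mem_union_left _ hwΦ₀)
        hwu hnadj hu' C hH1
    · have hstar : ∃ w ∈ Ψ₀, w ≠ u ∧ ¬ Γ.Adj u w := by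
        by_contra hc
        push_neg at hc
        exact hΨnostar ⟨u, hu, fun w hw hwne => hc w hw hwne⟩
      obtain ⟨w, hwΨ₀, hwu, hnadj⟩ := hstar
      refine key_contra Γ G Ψ Φ₀ Φ₁ Φ hΦsplit hΦjoin hΦcomplete u w
        (by rw [← hΨsplit]; exact Set.mem_union_left _ hu)
        (by rw [← hΨsplit]; exact Set.mem_union_left _ hwΨ₀)
        hwu hnadj hu' C ?_
      intro z hz
      obtain ⟨y, hy, hd⟩ := hH2 z hz
      exact ⟨y, hy, by rwa [SimpleGraph.dist_comm] at hd⟩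
  · intro h0
    have hsub1 : parabolic Γ G Φ₀ ≤ parabolic Γ G Ψ := by
      rw [h0]
      exact parabolic_mono Γ G (by rw [← hΨsplit]; exact Set.subset_union_left)
    have hsub2 : parabolic Γ G Ψ₀ ≤ parabolic Γ G Φ := by
      rw [← h0]
      exact parabolic_mono Γ G (by rw [← hΦsplit]; exact Set.subset_union_left)
    refine ⟨Fintype.card V, ?_, ?_⟩
    · exact easy_half Γ G Φ Φ₀ Φ₁ Ψ hΦsplit hΦjoin hΦcomplete hsub1
    · intro z hz
      obtain ⟨y, hy, hd⟩ := easy_half Γ G Ψ Ψ₀ Ψ₁ Φ hΨsplit hΨjoin hΨcomplete hsub2 z hz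
      exact ⟨y, hy, by rwa [SimpleGraph.dist_comm] at hd⟩
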